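/- Let ε, κ ∈ ℝ. On any open interval I containing 0 on which 1 + 2εs + κs² > 0, the function φ(s) := √(1 + 2εs + κs²) satisfies equation (E) with parameters (k₁, k₂, k₃) = (κ, −κ, 0), i.e. −κ s (φφ' − s φ'² − s φφ'') − (φ'² + φφ'') + κ φ(φ − s φ') = 0 on I; moreover φ(0) = 1 and φ'(0) = ε. -/

import Mathlib

/-- Equation (E) with parameters `k₁ k₂ k₃` for a real function `φ` at the point `s`:
`s(k₂ − k₃ s²)(φφ' − s φ'² − s φφ'') − (φ'² + φφ'') + k₁ φ(φ − s φ') = 0`. -/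
def eqE (k₁ k₂ k₃ : ℝ) (φ : ℝ → ℝ) (s : ℝ) : Prop :=
  s * (k₂ - k₃ * s ^ 2) *
      (φ s * deriv φ s - s * (deriv φ s) ^ 2 - s * φ s * deriv (deriv φ) s) -
    ((deriv φ s) ^ 2 + φ s * deriv (deriv φ) s) +
    k₁ * φ s * (φ s - s * deriv φ s) = 0

private lemma polyDeriv (ε κ s : ℝ) :
    HasDerivAt (fun t : ℝ => 1 + 2 * ε * t + κ * t ^ 2) (2 * ε + 2 * κ * s) s := by
  have h := ((hasDerivAt_const s (1:ℝ)).add ((hasDerivAt_id s).const_mul (2*ε))).add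
    ((hasDerivAt_pow 2 s).const_mul κ)
  refine h.congr_deriv ?_
  push_cast
  ring

private lemma sqrtDeriv (ε κ s : ℝ) (h : 0 < 1 + 2 * ε * s + κ * s ^ 2) :
    HasDerivAt (fun t : ℝ => Real.sqrt (1 + 2 * ε * t + κ * t ^ 2))
      ((2 * ε + 2 * κ * s) / (2 * Real.sqrt (1 + 2 * ε * s + κ * s ^ 2))) s :=
  (polyDeriv ε κ s).sqrt h.ne'

private lemma mylineDeriv (ε κ s : ℝ) :
    HasDerivAt (fun t : ℝ => 2 * ε + 2 * κ * t) (2 * κ) s := by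
  have h := (hasDerivAt_const s (2*ε)).add ((hasDerivAt_id s).const_mul (2*κ))
  refine h.congr_deriv ?_
  ring

private lemma gDeriv (ε κ s : ℝ) (h : 0 < 1 + 2 * ε * s + κ * s ^ 2) :
    HasDerivAt (fun t : ℝ => (2 * ε + 2 * κ * t) / (2 * Real.sqrt (1 + 2 * ε * t + κ * t ^ 2)))
      ((2 * κ * (2 * Real.sqrt (1 + 2 * ε * s + κ * s ^ 2)) -
        (2 * ε + 2 * κ * s) * (2 * ((2 * ε + 2 * κ * s) / (2 * Real.sqrt (1 + 2 * ε * s + κ * s ^ 2))))) /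
        (2 * Real.sqrt (1 + 2 * ε * s + κ * s ^ 2)) ^ 2) s := by
  have hq : (0:ℝ) < Real.sqrt (1 + 2 * ε * s + κ * s ^ 2) := Real.sqrt_pos.2 h
  exact (mylineDeriv ε κ s).div ((sqrtDeriv ε κ s h).const_mul 2) (by positivity)

theorem stmt12 (ε κ : ℝ) (a b : ℝ) (ha : a < 0) (hb : 0 < b)
    (hpos : ∀ s ∈ Set.Ioo a b, 0 < 1 + 2 * ε * s + κ * s ^ 2) :
    (∀ s ∈ Set.Ioo a b,
      eqE κ (-κ) 0 (fun t => Real.sqrt (1 + 2 * ε * t + κ * t ^ 2)) s) ∧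
    (fun t => Real.sqrt (1 + 2 * ε * t + κ * t ^ 2)) 0 = 1 ∧
    deriv (fun t => Real.sqrt (1 + 2 * ε * t + κ * t ^ 2)) 0 = ε := by
  have h0 : (0:ℝ) ∈ Set.Ioo a b := ⟨ha, hb⟩
  have hd1 : ∀ s ∈ Set.Ioo a b,
      deriv (fun t => Real.sqrt (1 + 2 * ε * t + κ * t ^ 2)) s =
        (2 * ε + 2 * κ * s) / (2 * Real.sqrt (1 + 2 * ε * s + κ * s ^ 2)) := by
    intro s hs
    exact (sqrtDeriv ε κ s (hpos s hs)).deriv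
  refine ⟨?_, ?_, ?_⟩
  · intro s hs
    have hP := hpos s hs
    have hq : (0:ℝ) < Real.sqrt (1 + 2 * ε * s + κ * s ^ 2) := Real.sqrt_pos.2 hP
    have hq2 : Real.sqrt (1 + 2 * ε * s + κ * s ^ 2) ^ 2 = 1 + 2 * ε * s + κ * s ^ 2 :=
      Real.sq_sqrt hP.le
    have hd2 : deriv (deriv (fun t => Real.sqrt (1 + 2 * ε * t + κ * t ^ 2))) s =
        (2 * κ * (2 * Real.sqrt (1 + 2 * ε * s + κ * s ^ 2)) -
          (2 * ε + 2 * κ * s) * (2 * ((2 * ε + 2 * κ * s) / (2 * Real.sqrt (1 + 2 * ε * s + κ * s ^ 2))))) /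
          (2 * Real.sqrt (1 + 2 * ε * s + κ * s ^ 2)) ^ 2 := by
      have heq : deriv (fun t => Real.sqrt (1 + 2 * ε * t + κ * t ^ 2)) =ᶠ[nhds s]
          (fun t => (2 * ε + 2 * κ * t) / (2 * Real.sqrt (1 + 2 * ε * t + κ * t ^ 2))) := by
        filter_upwards [isOpen_Ioo.mem_nhds hs] with t ht
        exact (sqrtDeriv ε κ t (hpos t ht)).deriv
      rw [heq.deriv_eq]
      exact (gDeriv ε κ s hP).deriv
    unfold eqE
    rw [hd1 s hs, hd2]
    have hs2 : Real.sqrt (1 + 2 * ε * s + κ * s ^ 2) = Real.sqrt (1 + 2 * ε * s + κ * s ^ 2) := rfl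
    set q := Real.sqrt (1 + 2 * ε * s + κ * s ^ 2) with hqdef
    simp only [← hqdef]
    field_simp
    linear_combination (κ * q ^ 2) * hq2
  · simp
  · rw [hd1 0 h0]
    norm_num
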